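/- Let X be a real topological vector space with topological dual X*, let Ω be a nonempty closed convex subset of X, let L = {u + λv : λ ∈ ℝ} ⊆ X* be a straight line that is not orthogonal to Ω, and let F : Ω → X* be a continuous (single-valued) map. Assume that F is monotone on every line segment [x,y] ⊆ Ω with ⟨v, x − y⟩ ≠ 0 (i.e. on every segment of Ω not orthogonal to L). Then F is monotone on all of Ω. -/

import Mathlib

/-- Let `Ω` be a nonempty closed convex subset of a real topological
vector space `X`, let `L = {u + λ•v}` (with `v ≠ 0`) be a straight line in `X*` not
orthogonal to `Ω`, and let `F : Ω → X*` be continuous (into the weak-* dual). If `F`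
is monotone on every segment `[x,y] ⊆ Ω` with `v (x - y) ≠ 0`, then `F` is monotone
on all of `Ω`. -/
theorem monotone_on_segments_imp_monotone
    {X : Type*} [AddCommGroup X] [Module ℝ X] [TopologicalSpace X]
    (Ω : Set X) (hΩne : Ω.Nonempty) (hΩclosed : IsClosed Ω) (hΩconv : Convex ℝ Ω)
    (u v : WeakDual ℝ X) (hv : v ≠ 0)
    (hnotorth : ∃ a ∈ Ω, ∃ b ∈ Ω, v a ≠ v b)
    (F : X → WeakDual ℝ X) (hFcont : ContinuousOn F Ω)
    (hseg : ∀ x ∈ Ω, ∀ y ∈ Ω, v (x - y) ≠ 0 →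
      ∀ p ∈ segment ℝ x y, ∀ q ∈ segment ℝ x y, (F p - F q) (p - q) ≥ 0) :
    ∀ x ∈ Ω, ∀ y ∈ Ω, (F x - F y) (x - y) ≥ 0 := by
  have mono : ∀ p ∈ Ω, ∀ q ∈ Ω, v (p - q) ≠ 0 →
      (F p) (p - q) - (F q) (p - q) ≥ 0 := by
    intro p hp q hq hpq
    have h := hseg p hp q hq hpq p (left_mem_segment ℝ p q) q (right_mem_segment ℝ p q)
    exact h
  intro x hx y hy
  have goal_eq : (F x - F y) (x - y) = (F x) (x - y) - (F y) (x - y) := by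
    rfl
  rcases ne_or_eq (v (x - y)) 0 with hne | heq
  · have h := mono x hx y hy hne
    rw [goal_eq]; linarith
  · -- orthogonal pair: v x = v y
    have hvxy : v x = v y := by
      have h : v x - v y = 0 := by simpa [map_sub] using heq
      linarith
    obtain ⟨a, ha, b, hb, hab⟩ := hnotorth
    obtain ⟨c, hc, hcx⟩ : ∃ c ∈ Ω, v c ≠ v x := by
      by_cases h : v a = v x
      · exact ⟨b, hb, fun e => hab (h.trans e.symm)⟩
      · exact ⟨a, ha, h⟩
    have hδ : v c - v y ≠ 0 := by
      rw [← hvxy]; intro h; exact hcx (by linarith)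
    set T : X := (1/2 : ℝ) • x + (1/2 : ℝ) • c with hT
    have hTΩ : T ∈ Ω := hΩconv hx hc (by norm_num) (by norm_num) (by norm_num)
    set C : ℝ := 2 * (2 * (F T) (c - y) - (F x) (c - y) - (F y) (c - y)) with hC
    have key : ∀ β : ℝ, 0 < β → β < 1/2 →
        (F x) (x - y) - (F y) (x - y) ≥ -β * C := by
      intro β hβ0 hβ2
      set z : X := (1/2 : ℝ) • x + ((1/2 : ℝ) - β) • y + β • c with hz
      have hzΩ : z ∈ Ω := by
        have h1 : (1/2:ℝ) • x + (1/2:ℝ) • y ∈ Ω :=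
          hΩconv hx hy (by norm_num) (by norm_num) (by norm_num)
        have h2 : (1 - 2*β) • ((1/2:ℝ) • x + (1/2:ℝ) • y) + (2*β) • T ∈ Ω :=
          hΩconv h1 hTΩ (by linarith) (by linarith) (by ring)
        have he : (1 - 2*β) • ((1/2:ℝ) • x + (1/2:ℝ) • y) + (2*β) • T = z := by
          rw [hT, hz]; module
        rwa [he] at h2
      have e1 : z - y = (1/2 : ℝ) • (x - y) + β • (c - y) := by rw [hz]; module
      have e2 : x - z = (1/2 : ℝ) • (x - y) - β • (c - y) := by rw [hz]; module
      have e3 : T - z = ((1/2 : ℝ) - β) • (c - y) := by rw [hT, hz]; module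
      have hv1 : v (z - y) ≠ 0 := by
        have hcalc : v (z - y) = β * (v c - v y) := by
          rw [e1]; simp [map_add, map_smul, map_sub, smul_eq_mul, hvxy]
        rw [hcalc]; exact mul_ne_zero (ne_of_gt hβ0) hδ
      have hv2 : v (x - z) ≠ 0 := by
        have hcalc : v (x - z) = -(β * (v c - v y)) := by
          rw [e2]; simp [map_add, map_smul, map_sub, smul_eq_mul, hvxy]
        rw [hcalc]
        exact neg_ne_zero.mpr (mul_ne_zero (ne_of_gt hβ0) hδ)
      have hv3 : v (T - z) ≠ 0 := by
        have hcalc : v (T - z) = (1/2 - β) * (v c - v y) := by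
          rw [e3]; simp [map_smul, map_sub, smul_eq_mul]
        rw [hcalc]
        exact mul_ne_zero (by linarith) hδ
      have mA := mono z hzΩ y hy hv1
      have mB := mono x hx z hzΩ hv2
      have mC := mono T hTΩ z hzΩ hv3
      have eA : ∀ w : WeakDual ℝ X, w (z - y) =
          (1/2) * w (x - y) + β * w (c - y) := by
        intro w; rw [e1]; simp [map_add, map_smul, smul_eq_mul]
      have eB : ∀ w : WeakDual ℝ X, w (x - z) =
          (1/2) * w (x - y) - β * w (c - y) := by
        intro w; rw [e2]; simp [map_sub, map_add, map_smul, smul_eq_mul]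
      have eC : ∀ w : WeakDual ℝ X, w (T - z) = (1/2 - β) * w (c - y) := by
        intro w; rw [e3]; simp [map_smul, smul_eq_mul]
      rw [eA (F z), eA (F y)] at mA
      rw [eB (F x), eB (F z)] at mB
      rw [eC (F T), eC (F z)] at mC
      -- from mC and β < 1/2 : F z (c-y) ≤ F T (c-y)
      have hRz : (F z) (c - y) ≤ (F T) (c - y) := by nlinarith
      rw [hC]
      nlinarith [mul_le_mul_of_nonneg_left hRz hβ0.le]
    -- conclude from: ∀ β ∈ (0, 1/2), D ≥ -β C
    rw [goal_eq]
    by_contra hcon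
    push_neg at hcon
    set D : ℝ := (F x) (x - y) - (F y) (x - y) with hD
    rcases le_or_gt C 0 with hC0 | hC0
    · have h := key (1/4) (by norm_num) (by norm_num)
      nlinarith
    · set β : ℝ := min (1/4) (-D / (2 * C)) with hβ
      have hβ0 : 0 < β := by
        apply lt_min (by norm_num)
        apply div_pos (by linarith) (by linarith)
      have hβ2 : β < 1/2 := lt_of_le_of_lt (min_le_left _ _) (by norm_num)
      have h := key β hβ0 hβ2
      have h3 : β * C ≤ (-D / (2 * C)) * C :=
        mul_le_mul_of_nonneg_right (min_le_right _ _) hC0.le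
      have h4 : (-D / (2 * C)) * C = -D / 2 := by
        field_simp
      linarith
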